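/- (Theorem 2, selection consistency) If √n·τ_{g,n}² → ∞ and log(τ_{g,n}²)/n → 0 as n → ∞ for every group g = 1,…,G, then lim_{n→∞} μ_n({x ∈ ℝ^p : 𝒜_n^Med(x) = 𝒜}) = 1; i.e., the median thresholding estimator is model-selection consistent. -/

import Mathlib

open MeasureTheory ProbabilityTheory Filter Classical
open scoped ENNReal

/-- The standard normal cumulative distribution function `Φ`. -/
noncomputable def stdNormalCDF (x : ℝ) : ℝ :=
  (gaussianReal 0 1 (Set.Iic x)).toReal

/-- The standard normal quantile function `Φ⁻¹`. -/
noncomputable def stdNormalQuantile (p : ℝ) : ℝ :=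
  sInf {x : ℝ | p ≤ stdNormalCDF x}

lemma stdNormalCDF_mono : Monotone stdNormalCDF := by
  intro x y hxy
  exact ENNReal.toReal_le_toReal (measure_ne_top _ _) (measure_ne_top _ _) |>.mpr
    (measure_mono (Set.Iic_subset_Iic.2 hxy))

lemma exists_quantile_bound : ∃ C : ℝ, ∀ r : ℝ, 1/2 ≤ r → r ≤ 2/3 → stdNormalQuantile r ≤ C := by
  have h1 : Tendsto (fun x : ℝ => gaussianReal 0 1 (Set.Iic x)) atTop (nhds 1) := by
    simpa using tendsto_measure_Iic_atTop (gaussianReal 0 1)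
  have h1' : Tendsto stdNormalCDF atTop (nhds 1) := by
    have := (ENNReal.tendsto_toReal (a := 1) (by norm_num)).comp h1
    exact this
  obtain ⟨x1, hx1⟩ : ∃ x1 : ℝ, 2/3 ≤ stdNormalCDF x1 := by
    have := h1'.eventually_const_lt (u := (2/3 : ℝ)) (by norm_num)
    exact (this.mono fun x hx => hx.le).exists
  have h0 : Tendsto (fun k : ℕ => gaussianReal 0 1 (Set.Iic (-(k:ℝ)))) atTop (nhds 0) := by
    have hanti : Antitone (fun k : ℕ => Set.Iic (-(k:ℝ))) := by
      intro k k' hk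
      exact Set.Iic_subset_Iic.2 (by exact_mod_cast neg_le_neg (Nat.cast_le.2 hk))
    have hempty : ⋂ k : ℕ, Set.Iic (-(k:ℝ)) = ∅ := by
      ext x
      simp only [Set.mem_iInter, Set.mem_Iic, Set.mem_empty_iff_false, iff_false, not_forall]
      obtain ⟨k, hk⟩ := exists_nat_gt (-x)
      exact ⟨k, by push_neg; linarith⟩
    have := tendsto_measure_iInter_atTop (μ := gaussianReal 0 1)
      (s := fun k : ℕ => Set.Iic (-(k:ℝ)))
      (fun k => measurableSet_Iic.nullMeasurableSet) hanti ⟨0, measure_ne_top _ _⟩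
    rw [hempty] at this
    simpa [Function.comp_def] using this
  obtain ⟨k, hk⟩ : ∃ k : ℕ, stdNormalCDF (-(k:ℝ)) < 1/2 := by
    have := h0.eventually_lt_const (v := (0:ℝ≥0∞)) (u := ENNReal.ofReal (1/2)) (by norm_num)
    obtain ⟨k, hk⟩ := this.exists
    refine ⟨k, ?_⟩
    have := (ENNReal.lt_ofReal_iff_toReal_lt (measure_ne_top _ _)).1 hk
    simpa [stdNormalCDF] using this
  refine ⟨x1, fun r h2 h3 => ?_⟩
  apply csInf_le
  · refine ⟨-(k:ℝ), fun y hy => ?_⟩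
    by_contra h
    push_neg at h
    have : stdNormalCDF y ≤ stdNormalCDF (-(k:ℝ)) := stdNormalCDF_mono h.le
    simp only [Set.mem_setOf_eq] at hy
    linarith
  · exact le_trans h3 hx1

lemma sqrt_nat_tendsto : Tendsto (fun n : ℕ => Real.sqrt n) atTop atTop := by
  refine tendsto_atTop_atTop.2 fun C => ⟨⌈C^2⌉₊, fun n hn => ?_⟩
  have hC2 : (C^2 : ℝ) ≤ n := le_trans (Nat.le_ceil _) (Nat.cast_le.2 hn)
  rcases le_or_gt C 0 with h | h
  · exact le_trans h (Real.sqrt_nonneg _)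
  · calc C = Real.sqrt (C^2) := (Real.sqrt_sq h.le).symm
      _ ≤ Real.sqrt n := Real.sqrt_le_sqrt hC2

lemma log_one_add_nat_div_tendsto :
    Tendsto (fun n : ℕ => Real.log (1 + (n:ℝ)) / n) atTop (nhds 0) := by
  have hsq : Tendsto (fun n : ℕ => 2 * Real.sqrt 2 / Real.sqrt n) atTop (nhds 0) := by
    simpa [div_eq_mul_inv] using (sqrt_nat_tendsto.inv_tendsto_atTop).const_mul (2 * Real.sqrt 2)
  refine squeeze_zero' ?_ ?_ hsq
  · filter_upwards [eventually_ge_atTop 1] with n hn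
    have hn1 : (1:ℝ) ≤ (n:ℝ) := by exact_mod_cast hn
    exact div_nonneg (Real.log_nonneg (by linarith)) (by positivity)
  · filter_upwards [eventually_ge_atTop 1] with n hn
    have hn1 : (1:ℝ) ≤ (n:ℝ) := by exact_mod_cast hn
    have hnpos : (0:ℝ) < n := by linarith
    have hlog : Real.log (1 + (n:ℝ)) ≤ 2 * Real.sqrt (1 + n) := by
      have h2 : Real.log (1 + (n:ℝ)) = 2 * Real.log (Real.sqrt (1 + n)) := by
        rw [Real.log_sqrt (by linarith)]; ring
      rw [h2]
      have := Real.log_le_sub_one_of_pos (x := Real.sqrt (1 + n)) (by positivity)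
      nlinarith [Real.sqrt_nonneg (1 + (n:ℝ))]
    have hsqle : Real.sqrt (1 + (n:ℝ)) ≤ Real.sqrt 2 * Real.sqrt n := by
      rw [← Real.sqrt_mul (by norm_num)]
      exact Real.sqrt_le_sqrt (by linarith)
    have hs : Real.sqrt n * Real.sqrt n = (n:ℝ) := Real.mul_self_sqrt (by positivity)
    rw [div_le_div_iff₀ hnpos (by positivity : (0:ℝ) < Real.sqrt n)]
    calc Real.log (1 + (n:ℝ)) * Real.sqrt n ≤ (2 * (Real.sqrt 2 * Real.sqrt n)) * Real.sqrt n := by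
          have h3 : Real.log (1 + (n:ℝ)) ≤ 2 * (Real.sqrt 2 * Real.sqrt n) := by
            calc Real.log (1 + (n:ℝ)) ≤ 2 * Real.sqrt (1+n) := hlog
            _ ≤ 2 * (Real.sqrt 2 * Real.sqrt n) := by linarith
          exact mul_le_mul_of_nonneg_right h3 (Real.sqrt_nonneg _)
      _ = 2 * Real.sqrt 2 * (n:ℝ) := by rw [mul_assoc, mul_assoc, hs]; ring

lemma half_le_div_aux {q D : ℝ} (h0 : 0 < q) (hD : 0 < D) (hle : D ≤ q) : 1/2 ≤ q/(q+D) := by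
  rw [le_div_iff₀ (by linarith)]; linarith

lemma div_le_quarter_aux {q D : ℝ} (h0 : 0 < q) (hD : 3*q ≤ D) : q/(q+D) ≤ 1/4 := by
  rw [div_le_div_iff₀ (by linarith) (by norm_num)]; linarith

lemma pi_eval_measure {p : ℕ} (β0 : Fin p → ℝ) (v : NNReal) (i : Fin p) (A : Set ℝ) :
    Measure.pi (fun j : Fin p => gaussianReal (β0 j) v) ((fun x => x i) ⁻¹' A)
      = gaussianReal (β0 i) v A := by
  have h1 : (fun x : Fin p → ℝ => x i) ⁻¹' A
      = Set.pi Set.univ (Function.update (fun _ : Fin p => (Set.univ : Set ℝ)) i A) := by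
    rw [← Set.eval_preimage]
  rw [h1, Measure.pi_pi]
  rw [Finset.prod_eq_single_of_mem i (Finset.mem_univ i)
    (fun j _ hj => by simp [Function.update_of_ne hj])]
  simp

lemma gaussian_affine_map {n : ℕ} (hn : 1 ≤ n) {σ : ℝ} (hσ : 0 < σ) (β : ℝ) :
    Measure.map (fun z : ℝ => (σ / Real.sqrt n) * z + β) (gaussianReal 0 1)
      = gaussianReal β (Real.toNNReal (σ^2/n)) := by
  have hnpos : (0:ℝ) < n := by exact_mod_cast hn
  have hv : (⟨(σ / Real.sqrt n)^2, sq_nonneg _⟩ : NNReal) * 1 = Real.toNNReal (σ^2/n) := by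
    rw [mul_one]
    rw [show Real.toNNReal (σ^2/n) = ⟨σ^2/n, by positivity⟩ from by
      simp [Real.toNNReal, max_eq_left (by positivity : (0:ℝ) ≤ σ^2/n)]; rfl]
    ext
    simp only [NNReal.coe_mk]
    rw [div_pow, Real.sq_sqrt hnpos.le]
  have hcomp : (fun z : ℝ => (σ / Real.sqrt n) * z + β) = (· + β) ∘ ((σ / Real.sqrt n) * ·) := rfl
  rw [hcomp, ← Measure.map_map (measurable_add_const β) (measurable_const_mul _),
    gaussianReal_map_const_mul, mul_zero, ← hv, gaussianReal_map_add_const, zero_add]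
  rfl
set_option maxHeartbeats 1000000 in
/-- **Theorem 2, selection consistency of median thresholding.**
Orthogonal design with Gaussian errors: the least squares estimator has law
`μ_n = ⊗_{i=1}^p N(β⁰_i, σ²/n)`, coordinates partitioned into nonempty groups by
`gr : Fin p → Fin G`.  Spike-and-slab posterior quantities: shrinkage
`B_{g,n} = 1/(1 + n τ_{g,n}²)`, spike probability
`l_{g,n} = π₀/(π₀ + (1-π₀)(1+nτ_{g,n}²)^{-m_g/2} exp((1-B_{g,n}) n ‖β̂_g^LS‖²/(2σ²)))`,
threshold `Q_{g,n} = Φ⁻¹(1/(2(1 - min(1/2, l_{g,n}))))`, and the median thresholding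
estimator `β̂^Med_{gj} = sgn(β̂^LS_{gj}) ((1-B_{g,n})|β̂^LS_{gj}| - (σ/√n) Q_{g,n} √(1-B_{g,n}))₊`
(set to `0` for group `g` when `l_{g,n} ≥ 1/2`).  If `√n τ_{g,n}² → ∞` and
`log(τ_{g,n}²)/n → 0` for every `g`, the selected model
`𝒜_n^Med = {g : β̂^Med_{n,g} ≠ 0}` satisfies `μ_n(𝒜_n^Med = 𝒜) → 1`, where
`𝒜 = {g : β⁰_g ≠ 0}`. -/
theorem median_thresholding_selection_consistency
    (p G : ℕ) (gr : Fin p → Fin G) (hgr : Function.Surjective gr)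
    (β0 : Fin p → ℝ) (σ : ℝ) (hσ : 0 < σ)
    (π₀ : ℝ) (hπ₀ : 0 < π₀) (hπ₁ : π₀ < 1)
    (τ2 : Fin G → ℕ → ℝ) (hτ2 : ∀ g n, 0 < τ2 g n)
    (hτlim : ∀ g, Tendsto (fun n : ℕ => Real.sqrt (n : ℝ) * τ2 g n) atTop atTop)
    (hτlog : ∀ g, Tendsto (fun n : ℕ => Real.log (τ2 g n) / (n : ℝ)) atTop (nhds 0))
    (μ : ℕ → Measure (Fin p → ℝ))
    (hμ : ∀ n, μ n =
      Measure.pi (fun i : Fin p => gaussianReal (β0 i) (Real.toNNReal (σ ^ 2 / n))))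
    (bnorm : Fin G → (Fin p → ℝ) → ℝ)
    (hbnorm : ∀ g x, bnorm g x =
      Real.sqrt (∑ i ∈ Finset.univ.filter (fun i => gr i = g), x i ^ 2))
    (B : Fin G → ℕ → ℝ)
    (hB : ∀ g n, B g n = 1 / (1 + (n : ℝ) * τ2 g n))
    (l : Fin G → ℕ → (Fin p → ℝ) → ℝ)
    (hl : ∀ g n x, l g n x = π₀ /
      (π₀ + (1 - π₀) *
        (1 + (n : ℝ) * τ2 g n) ^
          (-((Finset.univ.filter (fun i => gr i = g)).card : ℝ) / 2) *
        Real.exp ((1 - B g n) * (n : ℝ) * bnorm g x ^ 2 / (2 * σ ^ 2))))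
    (Q : Fin G → ℕ → (Fin p → ℝ) → ℝ)
    (hQ : ∀ g n x, Q g n x =
      stdNormalQuantile (1 / (2 * (1 - min (1 / 2) (l g n x)))))
    (med : ℕ → (Fin p → ℝ) → (Fin p → ℝ))
    (hmed : ∀ n x i, med n x i =
      if 1 / 2 ≤ l (gr i) n x then 0
      else Real.sign (x i) *
        max ((1 - B (gr i) n) * |x i| -
          σ / Real.sqrt (n : ℝ) * Q (gr i) n x * Real.sqrt (1 - B (gr i) n)) 0) :
    Tendsto (fun n => μ n
        {x | {g : Fin G | ∃ i, gr i = g ∧ med n x i ≠ 0} =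
             {g : Fin G | ∃ i, gr i = g ∧ β0 i ≠ 0}}) atTop (nhds 1) := by
  classical
  obtain ⟨Qs, hQs⟩ := exists_quantile_bound
  have hprob : ∀ n, IsProbabilityMeasure (μ n) := fun n => by rw [hμ n]; infer_instance
  have hm1 : ∀ g : Fin G, 1 ≤ ((Finset.univ.filter (fun i => gr i = g)).card : ℝ) := by
    intro g
    obtain ⟨i, hi⟩ := hgr g
    have : 0 < (Finset.univ.filter (fun i => gr i = g)).card :=
      Finset.card_pos.2 ⟨i, by simp [hi]⟩
    exact_mod_cast this
  have hmp : ∀ g : Fin G, ((Finset.univ.filter (fun i => gr i = g)).card : ℝ) ≤ p := by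
    intro g
    have h := Finset.card_filter_le (Finset.univ : Finset (Fin p)) (fun i => gr i = g)
    have h2 : (Finset.univ : Finset (Fin p)).card = p := by simp
    rw [h2] at h
    exact_mod_cast h
  have hA : ∀ g, Tendsto (fun n : ℕ => (n:ℝ) * τ2 g n) atTop atTop := by
    intro g
    refine tendsto_atTop_mono' atTop ?_ (hτlim g)
    filter_upwards [eventually_ge_atTop 1] with n hn
    have h1 : (1:ℝ) ≤ (n:ℝ) := by exact_mod_cast hn
    have ht := (hτ2 g n).le
    have hs : Real.sqrt n ≤ (n:ℝ) := by
      nlinarith [Real.sq_sqrt (by linarith : (0:ℝ) ≤ (n:ℝ)), Real.sqrt_nonneg (n:ℝ)]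
    nlinarith
  have hL : ∀ g, Tendsto (fun n : ℕ => Real.log (1 + (n:ℝ) * τ2 g n) / n) atTop (nhds 0) := by
    intro g
    have habs : Tendsto (fun n : ℕ => |Real.log (τ2 g n)| / n) atTop (nhds 0) := by
      have h := (hτlog g).abs
      rw [abs_zero] at h
      refine h.congr' ?_
      filter_upwards [eventually_ge_atTop 1] with n hn
      have h1 : (0:ℝ) ≤ (n:ℝ) := Nat.cast_nonneg n
      rw [abs_div, abs_of_nonneg h1]
    have hupper := log_one_add_nat_div_tendsto.add habs
    rw [add_zero] at hupper
    refine squeeze_zero' ?_ ?_ hupper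
    · filter_upwards [eventually_ge_atTop 1] with n hn
      have ht := (hτ2 g n).le
      have h1 : (0:ℝ) ≤ (n:ℝ) := Nat.cast_nonneg n
      exact div_nonneg (Real.log_nonneg (by nlinarith)) h1
    · filter_upwards [eventually_ge_atTop 1] with n hn
      have hn1 : (1:ℝ) ≤ (n:ℝ) := by exact_mod_cast hn
      have ht := hτ2 g n
      have hkey : Real.log (1 + (n:ℝ) * τ2 g n)
          ≤ Real.log (1+(n:ℝ)) + |Real.log (τ2 g n)| := by
        have hb : (1:ℝ) + n * τ2 g n ≤ (1 + n) * max 1 (τ2 g n) := by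
          rcases le_total (τ2 g n) 1 with h|h
          · rw [max_eq_left h]; nlinarith
          · rw [max_eq_right h]; nlinarith
        calc Real.log (1 + (n:ℝ) * τ2 g n)
            ≤ Real.log ((1+(n:ℝ)) * max 1 (τ2 g n)) :=
              Real.log_le_log (by nlinarith) hb
          _ = Real.log (1+(n:ℝ)) + Real.log (max 1 (τ2 g n)) :=
              Real.log_mul (by positivity) (by positivity)
          _ ≤ Real.log (1+(n:ℝ)) + |Real.log (τ2 g n)| := by
              rcases le_total (τ2 g n) 1 with h|h
              · rw [max_eq_left h, Real.log_one]
                have := abs_nonneg (Real.log (τ2 g n)); linarith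
              · rw [max_eq_right h, abs_of_nonneg (Real.log_nonneg h)]
      rw [← add_div]
      exact div_le_div_of_nonneg_right hkey (by linarith)
  have hDpos : ∀ (g : Fin G) (n : ℕ) (x : Fin p → ℝ), 0 < (1 - π₀) *
      (1 + (n:ℝ) * τ2 g n) ^ (-((Finset.univ.filter (fun i => gr i = g)).card : ℝ)/2) *
      Real.exp ((1 - B g n) * (n:ℝ) * bnorm g x ^ 2 / (2 * σ ^ 2)) := by
    intro g n x
    have hτ := hτ2 g n
    have h1 : (0:ℝ) < 1 + (n:ℝ) * τ2 g n := by
      have : (0:ℝ) ≤ (n:ℝ) * τ2 g n := mul_nonneg (Nat.cast_nonneg n) hτ.le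
      linarith
    have h2 : (0:ℝ) < 1 - π₀ := by linarith
    positivity
  refine tendsto_order.2 ⟨?_, ?_⟩
  swap
  · intro a ha
    filter_upwards with n
    have := hprob n
    exact lt_of_le_of_lt prob_le_one ha
  intro a ha
  have htail : Tendsto (fun K : ℕ => (gaussianReal (0:ℝ) 1) ((Metric.ball (0:ℝ) (K:ℝ))ᶜ))
      atTop (nhds 0) := by
    have hanti : Antitone (fun K : ℕ => (Metric.ball (0:ℝ) (K:ℝ))ᶜ) := fun K K' h =>
      Set.compl_subset_compl.2 (Metric.ball_subset_ball (by exact_mod_cast h))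
    have h := tendsto_measure_iInter_atTop (μ := gaussianReal (0:ℝ) 1)
      (s := fun K : ℕ => (Metric.ball (0:ℝ) (K:ℝ))ᶜ)
      (fun K => measurableSet_ball.compl.nullMeasurableSet) hanti ⟨0, measure_ne_top _ _⟩
    have hempty : ⋂ K : ℕ, (Metric.ball (0:ℝ) (K:ℝ))ᶜ = ∅ := by
      ext x
      simp only [Set.mem_iInter, Set.mem_compl_iff, Metric.mem_ball, Real.dist_eq, sub_zero,
        Set.mem_empty_iff_false, iff_false, not_forall, not_not]
      obtain ⟨K, hK⟩ := exists_nat_gt |x|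
      exact ⟨K, hK⟩
    rw [hempty] at h
    simpa [Function.comp_def] using h
  have hmul : Tendsto (fun K : ℕ => (p:ℝ≥0∞) * (gaussianReal (0:ℝ) 1)
      ((Metric.ball (0:ℝ) (K:ℝ))ᶜ)) atTop (nhds 0) := by
    have := ENNReal.Tendsto.const_mul (a := (p:ℝ≥0∞)) htail
      (Or.inr (by simp : (p:ℝ≥0∞) ≠ ⊤))
    simpa using this
  obtain ⟨K, hK1, hKlt⟩ :=
    ((eventually_ge_atTop 1).and (hmul.eventually_lt_const (tsub_pos_of_lt ha))).exists
  -- deterministic claim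
  have hdetg : ∀ g : Fin G, ∀ᶠ n : ℕ in atTop, ∀ x : Fin p → ℝ,
      (∀ i, |x i - β0 i| < σ / Real.sqrt n * K) →
      ((∃ i, gr i = g ∧ med n x i ≠ 0) ↔ (∃ i, gr i = g ∧ β0 i ≠ 0)) := by
    intro g
    by_cases hg : ∃ i, gr i = g ∧ β0 i ≠ 0
    · -- nonzero group
      obtain ⟨i₀, hi₀g, hi₀⟩ := hg
      have hbpos : 0 < |β0 i₀| := abs_pos.2 hi₀
      have hfac : Tendsto (fun n : ℕ => |β0 i₀|^2/(16*σ^2)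
          - ((Finset.univ.filter (fun i => gr i = g)).card : ℝ)/2
            * (Real.log (1 + (n:ℝ)*τ2 g n)/n)) atTop
          (nhds (|β0 i₀|^2/(16*σ^2))) := by
        have h0 := (hL g).const_mul (((Finset.univ.filter (fun i => gr i = g)).card : ℝ)/2)
        rw [mul_zero] at h0
        simpa using tendsto_const_nhds.sub h0
      have hT : Tendsto (fun n : ℕ => (|β0 i₀|^2/(16*σ^2)
          - ((Finset.univ.filter (fun i => gr i = g)).card : ℝ)/2
            * (Real.log (1 + (n:ℝ)*τ2 g n)/n)) * n) atTop atTop :=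
        Filter.Tendsto.pos_mul_atTop (by positivity) hfac tendsto_natCast_atTop_atTop
      filter_upwards [eventually_ge_atTop 1, (hA g).eventually_ge_atTop 1,
        hT.eventually_ge_atTop (Real.log (3*π₀/(1-π₀))),
        sqrt_nat_tendsto.eventually_ge_atTop (2*(σ*(K:ℝ))/|β0 i₀|),
        sqrt_nat_tendsto.eventually_ge_atTop (8*σ*(|Qs|+1)/|β0 i₀|)]
        with n hn1 hnA hn4 hn3 hn5
      intro x hx
      refine ⟨fun _ => ⟨i₀, hi₀g, hi₀⟩, fun _ => ⟨i₀, hi₀g, ?_⟩⟩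
      have hnR : (0:ℝ) < n := by exact_mod_cast hn1
      have hsq : (0:ℝ) < Real.sqrt n := Real.sqrt_pos.2 hnR
      have hc' : (0:ℝ) < σ / Real.sqrt n := by positivity
      have hKpos : (1:ℝ) ≤ (K:ℝ) := by exact_mod_cast hK1
      have hrle : σ / Real.sqrt n * K ≤ |β0 i₀|/2 := by
        rw [div_mul_eq_mul_div, div_le_div_iff₀ hsq (by norm_num)]
        rw [div_le_iff₀ hbpos] at hn3
        nlinarith
      have hxi : |β0 i₀|/2 ≤ |x i₀| := by
        have h1 := hx i₀
        have h2 : |β0 i₀| - |x i₀| ≤ |x i₀ - β0 i₀| := by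
          rw [abs_sub_comm]; exact abs_sub_abs_le_abs_sub _ _
        linarith
      have hxne : x i₀ ≠ 0 := by
        intro h0
        rw [h0, abs_zero] at hxi
        linarith
      have hsum : |β0 i₀|^2/4 ≤ ∑ i ∈ Finset.univ.filter (fun i => gr i = g), x i ^ 2 := by
        have h1 : |β0 i₀|^2/4 ≤ x i₀^2 := by
          have h2 := sq_abs (x i₀)
          nlinarith [abs_nonneg (x i₀)]
        refine le_trans h1 (Finset.single_le_sum (fun i _ => sq_nonneg (x i)) ?_)
        simp [hi₀g]
      have hbn : bnorm g x ^ 2 = ∑ i ∈ Finset.univ.filter (fun i => gr i = g), x i ^ 2 := by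
        rw [hbnorm]; exact Real.sq_sqrt (Finset.sum_nonneg fun i _ => sq_nonneg _)
      have hApos : (0:ℝ) < (n:ℝ) * τ2 g n := by linarith
      have h1A : (0:ℝ) < 1 + (n:ℝ) * τ2 g n := by linarith
      have h1B : 1 - B g n = (n:ℝ) * τ2 g n / (1 + (n:ℝ) * τ2 g n) := by
        rw [hB g n]; field_simp; ring
      have hBhalf : 1/2 ≤ 1 - B g n := by
        rw [h1B, le_div_iff₀ h1A]; linarith
      have hBle1 : 1 - B g n ≤ 1 := by
        rw [h1B, div_le_one h1A]; linarith
      have hSnn : (0:ℝ) ≤ ∑ i ∈ Finset.univ.filter (fun i => gr i = g), x i ^ 2 :=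
        Finset.sum_nonneg fun i _ => sq_nonneg _
      have hElb : (n:ℝ) * (|β0 i₀|^2/(16*σ^2))
          ≤ (1 - B g n) * (n:ℝ) * bnorm g x ^ 2 / (2*σ^2) := by
        rw [hbn, le_div_iff₀ (by positivity : (0:ℝ) < 2*σ^2)]
        have hstep1 : (1/2) * (|β0 i₀|^2/4) ≤ (1 - B g n)
            * ∑ i ∈ Finset.univ.filter (fun i => gr i = g), x i ^ 2 :=
          mul_le_mul hBhalf hsum (by positivity) (by linarith)
        calc (n:ℝ) * (|β0 i₀|^2/(16*σ^2)) * (2*σ^2) = (n:ℝ) * ((1/2)*(|β0 i₀|^2/4)) := by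
              field_simp; ring
          _ ≤ (n:ℝ) * ((1 - B g n)
              * ∑ i ∈ Finset.univ.filter (fun i => gr i = g), x i ^ 2) :=
              mul_le_mul_of_nonneg_left hstep1 (Nat.cast_nonneg n)
          _ = (1 - B g n) * (n:ℝ)
              * ∑ i ∈ Finset.univ.filter (fun i => gr i = g), x i ^ 2 := by ring
      have hrpow : (1 + (n:ℝ) * τ2 g n)
          ^ (-((Finset.univ.filter (fun i => gr i = g)).card : ℝ)/2)
          = Real.exp (-((Finset.univ.filter (fun i => gr i = g)).card : ℝ)/2
            * Real.log (1 + (n:ℝ) * τ2 g n)) := by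
        rw [Real.rpow_def_of_pos h1A, mul_comm]
      have hexp : Real.log (3*π₀/(1-π₀))
          ≤ -((Finset.univ.filter (fun i => gr i = g)).card : ℝ)/2
              * Real.log (1 + (n:ℝ) * τ2 g n)
            + (1 - B g n) * (n:ℝ) * bnorm g x ^ 2 / (2*σ^2) := by
        have halg : ∀ (c1 c2 L v : ℝ), v ≠ 0 → (c1 - c2 * (L / v)) * v = v * c1 - c2 * L := by
          intro c1 c2 L v hv
          field_simp
        have hexpand := halg (|β0 i₀|^2/(16*σ^2))
          (((Finset.univ.filter (fun i => gr i = g)).card : ℝ)/2)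
          (Real.log (1 + (n:ℝ)*τ2 g n)) (n:ℝ) (ne_of_gt hnR)
        rw [hexpand] at hn4
        linarith
      have hDlb : 3*π₀ ≤ (1-π₀) * (1 + (n:ℝ) * τ2 g n)
          ^ (-((Finset.univ.filter (fun i => gr i = g)).card : ℝ)/2)
          * Real.exp ((1 - B g n) * (n:ℝ) * bnorm g x ^ 2 / (2*σ^2)) := by
        rw [hrpow, mul_assoc, ← Real.exp_add]
        have h1pi : (0:ℝ) < 1 - π₀ := by linarith
        have h1pi' : (1:ℝ) - π₀ ≠ 0 := ne_of_gt h1pi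
        have h3pos : (0:ℝ) < 3*π₀/(1-π₀) := by positivity
        calc 3*π₀ = (1-π₀) * (3*π₀/(1-π₀)) := by field_simp
          _ = (1-π₀) * Real.exp (Real.log (3*π₀/(1-π₀))) := by rw [Real.exp_log h3pos]
          _ ≤ _ := mul_le_mul_of_nonneg_left (Real.exp_le_exp.2 hexp) (by linarith)
      have hl14 : l g n x ≤ 1/4 := by
        rw [hl g n x]
        exact div_le_quarter_aux hπ₀ hDlb
      have hlpos : 0 < l g n x := by
        rw [hl g n x]
        exact div_pos hπ₀ (by linarith [hDpos g n x])
      have hmin : min (1/2 : ℝ) (l g n x) = l g n x := min_eq_right (by linarith)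
      have hr12 : (1/2 : ℝ) ≤ 1/(2*(1 - min (1/2:ℝ) (l g n x))) := by
        rw [hmin, div_le_div_iff₀ (by norm_num) (by nlinarith : (0:ℝ) < 2*(1 - l g n x))]
        linarith
      have hr23 : 1/(2*(1 - min (1/2:ℝ) (l g n x))) ≤ 2/3 := by
        rw [hmin, div_le_div_iff₀ (by nlinarith : (0:ℝ) < 2*(1 - l g n x)) (by norm_num)]
        linarith
      have hQb : Q g n x ≤ |Qs| + 1 := by
        rw [hQ g n x]
        have := hQs _ hr12 hr23
        have h2 := le_abs_self Qs
        linarith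
      have hsqB1 : Real.sqrt (1 - B g n) ≤ 1 :=
        (Real.sqrt_le_sqrt hBle1).trans_eq Real.sqrt_one
      have hsig2 : σ / Real.sqrt n * (|Qs|+1) ≤ |β0 i₀|/8 := by
        rw [div_mul_eq_mul_div, div_le_div_iff₀ hsq (by norm_num)]
        rw [div_le_iff₀ hbpos] at hn5
        nlinarith [abs_nonneg Qs]
      have hterm : σ / Real.sqrt n * Q g n x * Real.sqrt (1 - B g n) ≤ |β0 i₀|/8 := by
        have h1 : σ / Real.sqrt n * Q g n x * Real.sqrt (1 - B g n)
            ≤ σ / Real.sqrt n * (|Qs|+1) * Real.sqrt (1 - B g n) :=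
          mul_le_mul_of_nonneg_right (mul_le_mul_of_nonneg_left hQb hc'.le)
            (Real.sqrt_nonneg _)
        have h2 : σ / Real.sqrt n * (|Qs|+1) * Real.sqrt (1 - B g n)
            ≤ σ / Real.sqrt n * (|Qs|+1) * 1 := by
          refine mul_le_mul_of_nonneg_left hsqB1 ?_
          have := abs_nonneg Qs
          positivity
        rw [mul_one] at h2
        linarith
      have hprod : |β0 i₀|/4 ≤ (1 - B g n) * |x i₀| := by
        calc |β0 i₀|/4 = (1/2)*(|β0 i₀|/2) := by ring
          _ ≤ (1 - B g n) * |x i₀| := mul_le_mul hBhalf hxi (by linarith) (by linarith)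
      have hvpos : 0 < (1 - B g n) * |x i₀|
          - σ / Real.sqrt n * Q g n x * Real.sqrt (1 - B g n) := by linarith
      rw [hmed n x i₀, hi₀g, if_neg (by linarith : ¬ (1/2:ℝ) ≤ l g n x)]
      refine mul_ne_zero ?_ ?_
      · rw [ne_eq, Real.sign_eq_zero_iff]
        exact hxne
      · rw [max_eq_left hvpos.le]
        exact ne_of_gt hvpos
    · -- zero group
      push_neg at hg
      have hgz : ∀ i, gr i = g → β0 i = 0 := fun i hi => by
        by_contra hne
        exact hne (hg i hi)
      filter_upwards [eventually_ge_atTop 1, (hA g).eventually_ge_atTop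
        (((1-π₀) * Real.exp ((p:ℝ)*(σ*(K:ℝ))^2/(2*σ^2)) / π₀)^2)] with n hn1 hnA
      intro x hx
      have hnR : (0:ℝ) < n := by exact_mod_cast hn1
      have hsq : (0:ℝ) < Real.sqrt n := Real.sqrt_pos.2 hnR
      have h1π : (0:ℝ) < 1 - π₀ := by linarith
      have hApos : (0:ℝ) ≤ (n:ℝ) * τ2 g n := mul_nonneg (Nat.cast_nonneg n) (hτ2 g n).le
      have h1A : (0:ℝ) < 1 + (n:ℝ) * τ2 g n := by linarith
      have hhalf : (1/2:ℝ) ≤ l g n x := by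
        have hbn : bnorm g x ^ 2 = ∑ i ∈ Finset.univ.filter (fun i => gr i = g), x i ^ 2 := by
          rw [hbnorm]; exact Real.sq_sqrt (Finset.sum_nonneg fun i _ => sq_nonneg _)
        have hsum : ∑ i ∈ Finset.univ.filter (fun i => gr i = g), x i ^ 2
            ≤ (p:ℝ) * (σ*(K:ℝ))^2 / n := by
          have hbound : ∀ i ∈ Finset.univ.filter (fun i => gr i = g),
              x i ^ 2 ≤ (σ / Real.sqrt n * K)^2 := by
            intro i hi
            have higr : gr i = g := by
              simpa using (Finset.mem_filter.1 hi).2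
            have h0 : β0 i = 0 := hgz i higr
            have h1 := hx i
            rw [h0, sub_zero] at h1
            have h2 := abs_nonneg (x i)
            nlinarith [sq_abs (x i)]
          calc ∑ i ∈ Finset.univ.filter (fun i => gr i = g), x i ^ 2
              ≤ (Finset.univ.filter (fun i => gr i = g)).card • ((σ / Real.sqrt n * K)^2) :=
                Finset.sum_le_card_nsmul _ _ _ hbound
            _ = ((Finset.univ.filter (fun i => gr i = g)).card : ℝ)
                * (σ / Real.sqrt n * K)^2 := nsmul_eq_mul _ _
            _ ≤ (p:ℝ) * ((σ*(K:ℝ))^2 / n) := by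
                have h2 : (σ / Real.sqrt n * K)^2 = (σ*(K:ℝ))^2 / n := by
                  rw [div_mul_eq_mul_div, div_pow, Real.sq_sqrt hnR.le, mul_pow]
                rw [h2]
                exact mul_le_mul_of_nonneg_right (hmp g) (by positivity)
            _ = (p:ℝ) * (σ*(K:ℝ))^2 / n := by ring
        have hB01 : 0 ≤ 1 - B g n ∧ 1 - B g n ≤ 1 := by
          constructor
          · rw [hB g n]
            have : 1/(1 + (n:ℝ) * τ2 g n) ≤ 1 := by
              rw [div_le_one h1A]; linarith
            linarith
          · rw [hB g n]
            have : 0 < 1/(1 + (n:ℝ) * τ2 g n) := by positivity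
            linarith
        have hexp : (1 - B g n) * (n:ℝ) * bnorm g x ^ 2 / (2*σ^2)
            ≤ (p:ℝ)*(σ*(K:ℝ))^2/(2*σ^2) := by
          rw [hbn]
          have hSnn : (0:ℝ) ≤ ∑ i ∈ Finset.univ.filter (fun i => gr i = g), x i ^ 2 :=
            Finset.sum_nonneg fun i _ => sq_nonneg _
          have h1 : (n:ℝ) * ∑ i ∈ Finset.univ.filter (fun i => gr i = g), x i ^ 2
              ≤ (p:ℝ)*(σ*(K:ℝ))^2 := by
            have h2 := mul_le_mul_of_nonneg_left hsum hnR.le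
            rwa [mul_comm ((n:ℝ)) ((p:ℝ) * (σ*(K:ℝ))^2 / (n:ℝ)),
              div_mul_cancel₀ _ (ne_of_gt hnR)] at h2
          have h4 : (1 - B g n) * (n:ℝ)
              * ∑ i ∈ Finset.univ.filter (fun i => gr i = g), x i ^ 2
              ≤ (p:ℝ)*(σ*(K:ℝ))^2 := by
            have h5 : (1 - B g n) * ((n:ℝ)
                * ∑ i ∈ Finset.univ.filter (fun i => gr i = g), x i ^ 2)
                ≤ 1 * ((n:ℝ) * ∑ i ∈ Finset.univ.filter (fun i => gr i = g), x i ^ 2) :=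
              mul_le_mul_of_nonneg_right hB01.2 (mul_nonneg hnR.le hSnn)
            rw [one_mul] at h5
            calc (1 - B g n) * (n:ℝ) * ∑ i ∈ Finset.univ.filter (fun i => gr i = g), x i ^ 2
                = (1 - B g n) * ((n:ℝ)
                  * ∑ i ∈ Finset.univ.filter (fun i => gr i = g), x i ^ 2) := by ring
              _ ≤ (n:ℝ) * ∑ i ∈ Finset.univ.filter (fun i => gr i = g), x i ^ 2 := h5
              _ ≤ (p:ℝ)*(σ*(K:ℝ))^2 := h1
          exact div_le_div_of_nonneg_right h4 (by positivity)
        have hDle : (1-π₀) * (1 + (n:ℝ) * τ2 g n)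
            ^ (-((Finset.univ.filter (fun i => gr i = g)).card : ℝ)/2)
            * Real.exp ((1 - B g n) * (n:ℝ) * bnorm g x ^ 2 / (2*σ^2)) ≤ π₀ := by
          have hR : (0:ℝ) < (1-π₀) * Real.exp ((p:ℝ)*(σ*(K:ℝ))^2/(2*σ^2)) / π₀ := by positivity
          have hsqrtA : (1-π₀) * Real.exp ((p:ℝ)*(σ*(K:ℝ))^2/(2*σ^2)) / π₀
              ≤ Real.sqrt (1 + (n:ℝ) * τ2 g n) := by
            have h6 := Real.sqrt_le_sqrt
              (show ((1-π₀) * Real.exp ((p:ℝ)*(σ*(K:ℝ))^2/(2*σ^2)) / π₀)^2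
                ≤ 1 + (n:ℝ)*τ2 g n by linarith)
            rwa [Real.sqrt_sq hR.le] at h6
          have hpow : (1 + (n:ℝ)*τ2 g n)
              ^ (-((Finset.univ.filter (fun i => gr i = g)).card : ℝ)/2)
              ≤ (Real.sqrt (1 + (n:ℝ)*τ2 g n))⁻¹ := by
            have h7 : (1 + (n:ℝ)*τ2 g n)
                ^ (-((Finset.univ.filter (fun i => gr i = g)).card : ℝ)/2)
                ≤ (1 + (n:ℝ)*τ2 g n) ^ (-(1:ℝ)/2) :=
              Real.rpow_le_rpow_of_exponent_le (by linarith) (by linarith [hm1 g])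
            have h8 : (1 + (n:ℝ)*τ2 g n) ^ (-(1:ℝ)/2)
                = (Real.sqrt (1 + (n:ℝ)*τ2 g n))⁻¹ := by
              rw [show (-(1:ℝ)/2) = -(1/2 : ℝ) by norm_num,
                Real.rpow_neg (by linarith), Real.sqrt_eq_rpow]
            exact h7.trans_eq h8
          have hexpe : Real.exp ((1 - B g n) * (n:ℝ) * bnorm g x ^ 2 / (2*σ^2))
              ≤ Real.exp ((p:ℝ)*(σ*(K:ℝ))^2/(2*σ^2)) := Real.exp_le_exp.2 hexp
          have hsqpos : 0 < Real.sqrt (1 + (n:ℝ)*τ2 g n) := Real.sqrt_pos.2 h1A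
          have hne1 : (1:ℝ) - π₀ ≠ 0 := ne_of_gt h1π
          have hne2 : Real.exp ((p:ℝ)*(σ*(K:ℝ))^2/(2*σ^2)) ≠ 0 := (Real.exp_pos _).ne'
          have hneπ : π₀ ≠ 0 := ne_of_gt hπ₀
          calc (1-π₀) * (1 + (n:ℝ)*τ2 g n)
              ^ (-((Finset.univ.filter (fun i => gr i = g)).card : ℝ)/2)
              * Real.exp ((1 - B g n) * (n:ℝ) * bnorm g x ^ 2 / (2*σ^2))
              ≤ (1-π₀) * (Real.sqrt (1 + (n:ℝ)*τ2 g n))⁻¹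
                * Real.exp ((p:ℝ)*(σ*(K:ℝ))^2/(2*σ^2)) := by
                refine mul_le_mul (mul_le_mul_of_nonneg_left hpow (by linarith)) hexpe
                  (Real.exp_pos _).le ?_
                positivity
            _ = (1-π₀) * Real.exp ((p:ℝ)*(σ*(K:ℝ))^2/(2*σ^2))
                * (Real.sqrt (1 + (n:ℝ)*τ2 g n))⁻¹ := by ring
            _ ≤ (1-π₀) * Real.exp ((p:ℝ)*(σ*(K:ℝ))^2/(2*σ^2))
                * ((1-π₀) * Real.exp ((p:ℝ)*(σ*(K:ℝ))^2/(2*σ^2)) / π₀)⁻¹ :=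
                mul_le_mul_of_nonneg_left (inv_anti₀ hR hsqrtA) (by positivity)
            _ = π₀ := by field_simp
        rw [hl g n x]
        exact half_le_div_aux hπ₀ (hDpos g n x) hDle
      constructor
      · rintro ⟨i, hig, hne⟩
        exfalso
        apply hne
        rw [hmed n x i, hig, if_pos hhalf]
      · rintro ⟨i, hig, hne⟩
        exact absurd (hgz i hig) hne
  have hdet : ∀ᶠ n : ℕ in atTop, ∀ x : Fin p → ℝ,
      (∀ i, |x i - β0 i| < σ / Real.sqrt n * K) →
      {g : Fin G | ∃ i, gr i = g ∧ med n x i ≠ 0} = {g : Fin G | ∃ i, gr i = g ∧ β0 i ≠ 0} := by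
    filter_upwards [eventually_all.2 hdetg] with n hn x hx
    ext g
    simp only [Set.mem_setOf_eq]
    exact hn g x hx
  filter_upwards [hdet, eventually_ge_atTop 1] with n hdetn hn1
  have hnpos : (0:ℝ) < n := by exact_mod_cast hn1
  have hsqn : (0:ℝ) < Real.sqrt n := Real.sqrt_pos.2 hnpos
  have hc : (0:ℝ) < σ / Real.sqrt n := by positivity
  have hprobn := hprob n
  have hES : Set.pi Set.univ (fun i => Metric.ball (β0 i) (σ / Real.sqrt n * K))
      ⊆ {x | {g : Fin G | ∃ i, gr i = g ∧ med n x i ≠ 0}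
           = {g : Fin G | ∃ i, gr i = g ∧ β0 i ≠ 0}} := by
    intro x hx
    exact hdetn x (fun i => by simpa [Real.dist_eq] using hx i (Set.mem_univ i))
  have hcoord : ∀ i : Fin p,
      μ n ((fun x : Fin p → ℝ => x i) ⁻¹' (Metric.ball (β0 i) (σ / Real.sqrt n * K))ᶜ)
        = (gaussianReal (0:ℝ) 1) ((Metric.ball (0:ℝ) (K:ℝ))ᶜ) := by
    intro i
    rw [hμ n, pi_eval_measure]
    rw [← gaussian_affine_map hn1 hσ (β0 i),
      Measure.map_apply (by fun_prop) measurableSet_ball.compl]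
    congr 1
    ext z
    simp only [Set.mem_preimage, Set.mem_compl_iff, Metric.mem_ball, Real.dist_eq, sub_zero,
      add_sub_cancel_right, abs_mul, abs_of_pos hc]
    exact not_congr (mul_lt_mul_iff_right₀ hc)
  have hEc : μ n (Set.pi Set.univ (fun i => Metric.ball (β0 i) (σ / Real.sqrt n * K)))ᶜ
      ≤ (p:ℝ≥0∞) * (gaussianReal (0:ℝ) 1) ((Metric.ball (0:ℝ) (K:ℝ))ᶜ) := by
    have hsub : (Set.pi Set.univ (fun i => Metric.ball (β0 i) (σ / Real.sqrt n * K)))ᶜ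
        ⊆ ⋃ i, (fun x : Fin p → ℝ => x i) ⁻¹' (Metric.ball (β0 i) (σ / Real.sqrt n * K))ᶜ := by
      intro x hx
      simp only [Set.mem_compl_iff, Set.mem_pi, Set.mem_univ, forall_true_left,
        not_forall] at hx
      obtain ⟨i, hi⟩ := hx
      exact Set.mem_iUnion.2 ⟨i, hi⟩
    calc μ n (Set.pi Set.univ (fun i => Metric.ball (β0 i) (σ / Real.sqrt n * K)))ᶜ
        ≤ ∑' i : Fin p, μ n ((fun x : Fin p → ℝ => x i) ⁻¹'
            (Metric.ball (β0 i) (σ / Real.sqrt n * K))ᶜ) :=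
          le_trans (measure_mono hsub) (measure_iUnion_le _)
      _ = ∑ i : Fin p, (gaussianReal (0:ℝ) 1) ((Metric.ball (0:ℝ) (K:ℝ))ᶜ) := by
          rw [tsum_fintype]; exact Finset.sum_congr rfl (fun i _ => hcoord i)
      _ = (p:ℝ≥0∞) * (gaussianReal (0:ℝ) 1) ((Metric.ball (0:ℝ) (K:ℝ))ᶜ) := by
          simp [Finset.sum_const, Finset.card_univ]
  have h1E : 1 - (p:ℝ≥0∞) * (gaussianReal (0:ℝ) 1) ((Metric.ball (0:ℝ) (K:ℝ))ᶜ)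
      ≤ μ n (Set.pi Set.univ (fun i => Metric.ball (β0 i) (σ / Real.sqrt n * K))) := by
    have h2 : (1:ℝ≥0∞) ≤ μ n (Set.pi Set.univ (fun i => Metric.ball (β0 i)
        (σ / Real.sqrt n * K))) + μ n (Set.pi Set.univ (fun i => Metric.ball (β0 i)
        (σ / Real.sqrt n * K)))ᶜ := by
      have h3 := measure_union_le (μ := μ n)
        (Set.pi Set.univ (fun i => Metric.ball (β0 i) (σ / Real.sqrt n * K)))
        (Set.pi Set.univ (fun i => Metric.ball (β0 i) (σ / Real.sqrt n * K)))ᶜ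
      rwa [Set.union_compl_self, measure_univ] at h3
    have h3 : 1 - μ n (Set.pi Set.univ (fun i => Metric.ball (β0 i)
        (σ / Real.sqrt n * K)))ᶜ ≤ μ n (Set.pi Set.univ (fun i => Metric.ball (β0 i)
        (σ / Real.sqrt n * K))) := tsub_le_iff_right.2 h2
    exact le_trans (tsub_le_tsub_left hEc 1) h3
  have hat : a < 1 - (p:ℝ≥0∞) * (gaussianReal (0:ℝ) 1) ((Metric.ball (0:ℝ) (K:ℝ))ᶜ) := by
    have hpt_ne : (p:ℝ≥0∞) * (gaussianReal (0:ℝ) 1) ((Metric.ball (0:ℝ) (K:ℝ))ᶜ) ≠ ⊤ :=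
      ne_top_of_lt (lt_of_lt_of_le hKlt tsub_le_self)
    refine (ENNReal.cancel_of_ne hpt_ne).lt_tsub_iff_right.2 ?_
    calc a + (p:ℝ≥0∞) * (gaussianReal (0:ℝ) 1) ((Metric.ball (0:ℝ) (K:ℝ))ᶜ)
        < a + (1 - a) := ENNReal.add_lt_add_left (ne_top_of_lt ha) hKlt
      _ = 1 := add_tsub_cancel_of_le ha.le
  calc a < 1 - (p:ℝ≥0∞) * (gaussianReal (0:ℝ) 1) ((Metric.ball (0:ℝ) (K:ℝ))ᶜ) := hat
    _ ≤ μ n (Set.pi Set.univ (fun i => Metric.ball (β0 i) (σ / Real.sqrt n * K))) := h1E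
    _ ≤ μ n {x | {g : Fin G | ∃ i, gr i = g ∧ med n x i ≠ 0}
           = {g : Fin G | ∃ i, gr i = g ∧ β0 i ≠ 0}} := measure_mono hES
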